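/- Let F : ℝ^d → ℝ be differentiable and continuous DR-submodular, i.e., x ≤ y coordinatewise implies ∇F(y)_i ≤ ∇F(x)_i for every coordinate i. Then F is concave along nonnegative directions: for all x ≤ y (coordinatewise), F(y) ≤ F(x) + ⟨∇F(x), y − x⟩. -/

import Mathlib

theorem DR_submodular_concave_along_nonneg_directions
    (d : ℕ) (F : EuclideanSpace ℝ (Fin d) → ℝ)
    (hdiff : Differentiable ℝ F)
    (hDR : ∀ x y : EuclideanSpace ℝ (Fin d), (∀ i, x i ≤ y i) →
      ∀ i, gradient F y i ≤ gradient F x i) :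
    ∀ x y : EuclideanSpace ℝ (Fin d), (∀ i, x i ≤ y i) →
      F y ≤ F x + inner ℝ (gradient F x) (y - x) := by
  intro x y hxy
  set v : EuclideanSpace ℝ (Fin d) := y - x with hv
  have hvnn : ∀ i, 0 ≤ v i := fun i => by
    simp [hv, sub_nonneg, hxy i]
  set γ : ℝ → EuclideanSpace ℝ (Fin d) := fun t => x + t • v with hγ
  have hγd : ∀ t : ℝ, HasDerivAt γ v t := fun t =>
    by have h := (hasDerivAt_id t).smul_const v; rw [one_smul] at h; exact h.const_add x
  set g : ℝ → ℝ := fun t => F (γ t) with hg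
  have hgd : ∀ t : ℝ, HasDerivAt g (inner ℝ (gradient F (γ t)) v : ℝ) t := by
    intro t
    have h1 : HasGradientAt F (gradient F (γ t)) (γ t) :=
      (hdiff (γ t)).hasGradientAt
    have h2 := h1.hasFDerivAt.comp_hasDerivAt t (hγd t)
    have h3 : HasDerivAt g ((InnerProductSpace.toDual ℝ (EuclideanSpace ℝ (Fin d)) (gradient F (γ t))) v) t := h2
    simpa [InnerProductSpace.toDual_apply_apply] using h3
  have key : ∀ p : EuclideanSpace ℝ (Fin d), (∀ i, x i ≤ p i) →
      (inner ℝ (gradient F p) v : ℝ) ≤ inner ℝ (gradient F x) v := by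
    intro p hp
    simp only [PiLp.inner_apply, RCLike.inner_apply, conj_trivial]
    exact Finset.sum_le_sum fun i _ =>
      mul_le_mul_of_nonneg_left (hDR x p hp i) (hvnn i)
  obtain ⟨c, hc, hceq⟩ := exists_hasDerivAt_eq_slope g
    (fun t => (inner ℝ (gradient F (γ t)) v : ℝ)) (by norm_num : (0:ℝ) < 1)
    (fun t _ => (hgd t).continuousAt.continuousWithinAt)
    (fun t _ => hgd t)
  have hg0 : g 0 = F x := by simp [hg, hγ]
  have hg1 : g 1 = F y := by
    simp only [hg, hγ, one_smul, hv]
    congr 1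
    abel
  have hxc : ∀ i, x i ≤ γ c i := fun i => by
    have : (γ c) i = x i + c * v i := rfl
    rw [this]
    nlinarith [hvnn i, hc.1]
  have hle := key (γ c) hxc
  rw [hceq] at hle
  rw [hg0, hg1] at hle
  linarith [hle]
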